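/- Let M : ℕ → ℝ be a sequence of positive reals with M_0 = 1, M increasing, M logarithmically convex, and satisfying the derivability condition sup_{j≥1} (M_{j+1}/M_j)^{1/j} < ∞. Then for every real ν > 0 there exist constants C(ν) > 0 and K(ν) ≥ 1 such that t^{−ν}·h_M(t) ≤ C(ν)·h_M(K(ν)·t) for all t > 0, where h_M(t) = inf_{j≥0} t^j·M_j. -/
import Mathlib


open Set Filter Topology

noncomputable section

/-- The function `h_M` associated with the sequence `M`:
`h_M(t) = inf_{j≥0} t^j·M_j` for `t ≠ 0`, and `h_M(0) = 0`. -/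
def hFun (M : ℕ → ℝ) (t : ℝ) : ℝ := if t = 0 then 0 else ⨅ j : ℕ, t ^ j * M j

private lemma ratio_iter (M : ℕ → ℝ) (hpos : ∀ j, 0 < M j) (D : ℝ) (hD : 1 ≤ D)
    (hq : ∀ j : ℕ, M (j+1) ≤ D^(j+1) * M j) :
    ∀ n k : ℕ, M (k+n) ≤ D^(n*(k+n)) * M k := by
  intro n
  induction n with
  | zero => intro k; simp
  | succ n ih =>
    intro k
    have h1 : M (k+n+1) ≤ D^(k+n+1) * M (k+n) := hq (k+n)
    have h2 : M (k+n) ≤ D^(n*(k+n)) * M k := ih k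
    have hD0 : (0:ℝ) < D := lt_of_lt_of_le one_pos hD
    have h3 : M (k+(n+1)) ≤ D^(k+n+1) * (D^(n*(k+n)) * M k) := by
      have := mul_le_mul_of_nonneg_left h2 (le_of_lt (pow_pos hD0 (k+n+1)))
      calc M (k+(n+1)) = M (k+n+1) := by ring_nf
        _ ≤ D^(k+n+1) * M (k+n) := h1
        _ ≤ D^(k+n+1) * (D^(n*(k+n)) * M k) := this
    calc M (k+(n+1)) ≤ D^(k+n+1) * (D^(n*(k+n)) * M k) := h3
      _ = D^((k+n+1) + n*(k+n)) * M k := by rw [pow_add]; ring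
      _ ≤ D^((n+1)*(k+(n+1))) * M k := by
          apply mul_le_mul_of_nonneg_right _ (le_of_lt (hpos k))
          apply pow_le_pow_right₀ hD
          ring_nf; omega

/-- Under the derivability condition, `t^{-ν}·h_M(t) ≤ C(ν)·h_M(K(ν)·t)`. -/
theorem hFun_negative_power_bound
    (M : ℕ → ℝ) (hpos : ∀ j, 0 < M j) (hM0 : M 0 = 1) (hmono : Monotone M)
    (hlc : ∀ j : ℕ, (M (j+1))^2 ≤ M j * M (j+2))
    (hder : ∃ A : ℝ, ∀ j : ℕ, 1 ≤ j → (M (j+1) / M j) ^ ((1:ℝ)/(j:ℝ)) ≤ A) :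
    ∀ ν : ℝ, 0 < ν → ∃ C > (0:ℝ), ∃ K ≥ (1:ℝ), ∀ t : ℝ, 0 < t →
      t ^ (-ν) * hFun M t ≤ C * hFun M (K * t) := by
  intro ν hν
  obtain ⟨A, hA⟩ := hder
  set B : ℝ := max A 1 with hBdef
  have hB1 : (1:ℝ) ≤ B := le_max_right _ _
  have hB0 : (0:ℝ) < B := lt_of_lt_of_le one_pos hB1
  have hA0 : (0:ℝ) ≤ A := by
    have h := hA 1 le_rfl
    have hx : (0:ℝ) < (M 2 / M 1) ^ ((1:ℝ)/((1:ℕ):ℝ)) :=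
      Real.rpow_pos_of_pos (div_pos (hpos 2) (hpos 1)) _
    linarith
  -- ratio bound for j ≥ 1
  have hq1 : ∀ j : ℕ, 1 ≤ j → M (j+1) ≤ B^j * M j := by
    intro j hj
    have hx : (0:ℝ) < M (j+1) / M j := div_pos (hpos _) (hpos _)
    have hj0 : ((j:ℝ)) ≠ 0 := Nat.cast_ne_zero.mpr (by omega)
    have h2 : ((M (j+1) / M j) ^ ((1:ℝ)/(j:ℝ))) ^ ((j:ℕ):ℝ) ≤ A ^ ((j:ℕ):ℝ) :=
      Real.rpow_le_rpow (Real.rpow_nonneg hx.le _) (hA j hj) (Nat.cast_nonneg j)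
    have h3 : ((M (j+1) / M j) ^ ((1:ℝ)/(j:ℝ))) ^ ((j:ℕ):ℝ) = M (j+1) / M j := by
      rw [← Real.rpow_mul hx.le, one_div, inv_mul_cancel₀ hj0, Real.rpow_one]
    have h4 : M (j+1) / M j ≤ A ^ j := by
      rw [← h3]
      calc _ ≤ A ^ ((j:ℕ):ℝ) := h2
        _ = A ^ j := Real.rpow_natCast A j
    have h5 : A ^ j ≤ B ^ j := pow_le_pow_left₀ hA0 (le_max_left _ _) j
    have := (div_le_iff₀ (hpos j)).mp (le_trans h4 h5)
    linarith
  set D : ℝ := B^2 with hDdef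
  have hD1 : (1:ℝ) ≤ D := one_le_pow₀ hB1
  have hD0 : (0:ℝ) < D := lt_of_lt_of_le one_pos hD1
  have hq : ∀ j : ℕ, M (j+1) ≤ D^(j+1) * M j := by
    intro j
    rcases Nat.eq_zero_or_pos j with rfl | hj
    · -- M 1 ≤ D * M 0 = B^2
      have h1 : M 1 ^ 2 ≤ M 0 * M 2 := hlc 0
      have h2 : M 2 ≤ B^1 * M 1 := hq1 1 le_rfl
      have h3 : M 1 * M 1 ≤ B * M 1 := by nlinarith [hpos 1, hpos 2]
      have h4 : M 1 ≤ B := le_of_mul_le_mul_right (by linarith) (hpos 1)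
      have : M 1 ≤ B^2 := le_trans h4 (by nlinarith)
      simpa [hM0, hDdef] using this
    · have h1 := hq1 j hj
      have h2 : B^j ≤ D^(j+1) := by
        rw [hDdef, ← pow_mul]
        exact pow_le_pow_right₀ hB1 (by omega)
      have := mul_le_mul_of_nonneg_right h2 (le_of_lt (hpos j))
      linarith
  set n : ℕ := ⌈ν⌉₊ with hn
  have hνn : ν ≤ (n:ℝ) := Nat.le_ceil ν
  refine ⟨D^(n*n), pow_pos hD0 _, D^n, one_le_pow₀ hD1, ?_⟩
  set K : ℝ := D^n with hK
  set C : ℝ := D^(n*n) with hC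
  have hC1 : (1:ℝ) ≤ C := one_le_pow₀ hD1
  have hΚ0 : (0:ℝ) < K := pow_pos hD0 _
  have hK1 : (1:ℝ) ≤ K := one_le_pow₀ hD1
  intro t ht
  have hKt : 0 < K * t := mul_pos hΚ0 ht
  have bdd : ∀ s : ℝ, 0 < s → BddBelow (Set.range fun j : ℕ => s^j * M j) := by
    intro s hs
    refine ⟨0, ?_⟩
    rintro x ⟨j, rfl⟩
    exact le_of_lt (mul_pos (pow_pos hs j) (hpos j))
  rw [hFun, if_neg (ne_of_gt ht), hFun, if_neg (ne_of_gt hKt)]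
  rcases le_total 1 t with h1t | ht1
  · -- t ≥ 1 : both infima are 1
    have hone : ∀ s : ℝ, 1 ≤ s → (⨅ j : ℕ, s^j * M j) = 1 := by
      intro s hs
      apply le_antisymm
      · have := ciInf_le (bdd s (lt_of_lt_of_le one_pos hs)) 0
        simpa [hM0] using this
      · apply le_ciInf
        intro j
        have hsj : (1:ℝ) ≤ s^j := one_le_pow₀ hs
        have hMj : (1:ℝ) ≤ M j := hM0 ▸ hmono (Nat.zero_le j)
        nlinarith
    rw [hone t h1t, hone (K * t) (le_trans h1t (le_mul_of_one_le_left (by linarith) hK1))]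
    have : t ^ (-ν) ≤ 1 := Real.rpow_le_one_of_one_le_of_nonpos h1t (by linarith)
    nlinarith
  · -- t ≤ 1
    have hCpos : (0:ℝ) < C := lt_of_lt_of_le one_pos hC1
    rw [← div_le_iff₀' hCpos]
    apply le_ciInf
    intro k
    rw [div_le_iff₀' hCpos]
    have h1 : (⨅ j : ℕ, t^j * M j) ≤ t^(k+n) * M (k+n) := ciInf_le (bdd t ht) (k+n)
    have htν : (0:ℝ) < t ^ (-ν) := Real.rpow_pos_of_pos ht _
    have h2 : t ^ (-ν) * (⨅ j : ℕ, t^j * M j) ≤ t ^ (-ν) * (t^(k+n) * M (k+n)) :=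
      mul_le_mul_of_nonneg_left h1 htν.le
    refine le_trans h2 ?_
    -- power bound
    have e1 : t ^ (-ν) * (t:ℝ)^(k+n) = t ^ ((((k+n):ℕ):ℝ) - ν) := by
      rw [← Real.rpow_natCast t (k+n), ← Real.rpow_add ht]
      ring_nf
    have e2 : t ^ ((((k+n):ℕ):ℝ) - ν) ≤ t ^ (((k:ℕ)):ℝ) := by
      apply Real.rpow_le_rpow_of_exponent_ge ht ht1
      push_cast
      linarith
    have e3 : t ^ (-ν) * (t:ℝ)^(k+n) ≤ t^k := by
      rw [e1]
      calc _ ≤ t ^ (((k:ℕ)):ℝ) := e2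
        _ = t^k := Real.rpow_natCast t k
    have hM : M (k+n) ≤ C * K^k * M k := by
      have := ratio_iter M hpos D hD1 hq n k
      have hEq : D^(n*(k+n)) = C * K^k := by
        calc D^(n*(k+n)) = D^(n*n) * D^(n*k) := by rw [← pow_add]; congr 1; ring
          _ = C * K^k := by rw [hC, hK, pow_mul, pow_mul]
      rw [hEq] at this
      linarith
    calc t ^ (-ν) * (t^(k+n) * M (k+n))
        = (t ^ (-ν) * t^(k+n)) * M (k+n) := by ring
      _ ≤ t^k * (C * K^k * M k) := by
          apply mul_le_mul e3 hM (le_of_lt (hpos _))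
          positivity
      _ = C * ((K*t)^k * M k) := by rw [mul_pow]; ring
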